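/- Let $\nu \in (0,1)$ and let $F_1, F_2, G_1, G_2 : [0,\infty) \to \mathbb{C}$ be twice continuously differentiable with $F_2'(0) = G_2'(0) = 0$. Define $f(z) = z^{\nu+1/2} F_1(z) + z^{-\nu+1/2} F_2(z)$ and $g(z) = z^{\nu+1/2} G_1(z) + z^{-\nu+1/2} G_2(z)$ for $z > 0$. Then the Wronskian $f(z)g'(z) - f'(z)g(z)$ has a limit as $z \to 0^+$, and $\lim_{z\to 0^+}\big(f(z)g'(z) - f'(z)g(z)\big) = 2\nu\,\big(F_2(0)G_1(0) - F_1(0)G_2(0)\big)$. In particular, if the leading coefficient vectors are proportional, i.e. $F_1(0)G_2(0) = F_2(0)G_1(0)$ (as happens when $f$ and $g$ obey the same $\alpha$-boundary condition at $z=0$), then the boundary term $\lim_{z\to 0^+} W_z[f,g]$ vanishes. -/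

import Mathlib

open Real Filter

lemma aux_hasDerivAt (p : ℝ) (F : ℝ → ℂ) {z : ℝ} (hz : 0 < z)
    (hF : DifferentiableAt ℝ F z) :
    HasDerivAt (fun z : ℝ => ((z ^ p : ℝ) : ℂ) * F z)
      (((p * z ^ (p - 1) : ℝ) : ℂ) * F z + ((z ^ p : ℝ) : ℂ) * deriv F z) z :=
  ((Real.hasDerivAt_rpow_const (Or.inl hz.ne')).ofReal_comp).mul hF.hasDerivAt

lemma aux_deriv (ν : ℝ) (F₁ F₂ : ℝ → ℂ) (hF₁ : ContDiff ℝ 2 F₁) (hF₂ : ContDiff ℝ 2 F₂)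
    (f : ℝ → ℂ)
    (hf : ∀ z : ℝ, 0 < z →
      f z = ((z ^ (ν + 1 / 2) : ℝ) : ℂ) * F₁ z + ((z ^ (-ν + 1 / 2) : ℝ) : ℂ) * F₂ z)
    {z : ℝ} (hz : 0 < z) :
    deriv f z = (((ν + 1/2) * z ^ (ν + 1/2 - 1) : ℝ) : ℂ) * F₁ z
        + ((z ^ (ν + 1/2) : ℝ) : ℂ) * deriv F₁ z
        + ((((-ν + 1/2)) * z ^ (-ν + 1/2 - 1) : ℝ) : ℂ) * F₂ z
        + ((z ^ (-ν + 1/2) : ℝ) : ℂ) * deriv F₂ z := by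
  have hd := (aux_hasDerivAt (ν + 1/2) F₁ hz
      ((hF₁.differentiable (by norm_num)).differentiableAt)).add
    (aux_hasDerivAt (-ν + 1/2) F₂ hz ((hF₂.differentiable (by norm_num)).differentiableAt))
  have heq : f =ᶠ[nhds z] fun z => ((z ^ (ν + 1 / 2) : ℝ) : ℂ) * F₁ z
      + ((z ^ (-ν + 1 / 2) : ℝ) : ℂ) * F₂ z :=
    eventually_of_mem (isOpen_Ioi.mem_nhds hz) (fun x hx => hf x hx)
  rw [heq.deriv_eq, show deriv (fun z : ℝ => ((z ^ (ν + 1 / 2) : ℝ) : ℂ) * F₁ z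
      + ((z ^ (-ν + 1 / 2) : ℝ) : ℂ) * F₂ z) z = _ from hd.deriv]
  ring

/-- For `ν ∈ (0,1)` and functions `f = z^{ν+1/2}F₁ + z^{-ν+1/2}F₂`,
`g = z^{ν+1/2}G₁ + z^{-ν+1/2}G₂` with `F₁,F₂,G₁,G₂` twice continuously differentiable up to
the boundary and `F₂'(0) = G₂'(0) = 0`, the Wronskian `f g' - f' g` has a limit as
`z → 0⁺`, equal to `2ν (F₂(0)G₁(0) - F₁(0)G₂(0))`. In particular it vanishes when
`F₁(0)G₂(0) = F₂(0)G₁(0)` (e.g. for a common `α`-boundary condition). -/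
theorem boundary_wronskian_limit (ν : ℝ) (hν : 0 < ν ∧ ν < 1)
    (F₁ F₂ G₁ G₂ : ℝ → ℂ)
    (hF₁ : ContDiff ℝ 2 F₁) (hF₂ : ContDiff ℝ 2 F₂)
    (hG₁ : ContDiff ℝ 2 G₁) (hG₂ : ContDiff ℝ 2 G₂)
    (hF₂' : deriv F₂ 0 = 0) (hG₂' : deriv G₂ 0 = 0)
    (f g : ℝ → ℂ)
    (hf : ∀ z : ℝ, 0 < z →
      f z = ((z ^ (ν + 1 / 2) : ℝ) : ℂ) * F₁ z + ((z ^ (-ν + 1 / 2) : ℝ) : ℂ) * F₂ z)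
    (hg : ∀ z : ℝ, 0 < z →
      g z = ((z ^ (ν + 1 / 2) : ℝ) : ℂ) * G₁ z + ((z ^ (-ν + 1 / 2) : ℝ) : ℂ) * G₂ z) :
    Tendsto (fun z => f z * deriv g z - deriv f z * g z)
        (nhdsWithin 0 (Set.Ioi 0))
        (nhds (((2 * ν : ℝ) : ℂ) * (F₂ 0 * G₁ 0 - F₁ 0 * G₂ 0)))
      ∧ (F₁ 0 * G₂ 0 = F₂ 0 * G₁ 0 →
          Tendsto (fun z => f z * deriv g z - deriv f z * g z)
            (nhdsWithin 0 (Set.Ioi 0)) (nhds 0)) := by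
  obtain ⟨hν0, hν1⟩ := hν
  -- the function ψ controlling the singular term
  set ψ : ℝ → ℂ := fun z => F₂ z * deriv G₂ z - deriv F₂ z * G₂ z with hψdef
  have hψ0 : ψ 0 = 0 := by simp [hψdef, hF₂', hG₂']
  have hdF₂ : ContDiff ℝ 1 (deriv F₂) :=
    (contDiff_succ_iff_deriv.mp (by rwa [one_add_one_eq_two])).2.2
  have hdG₂ : ContDiff ℝ 1 (deriv G₂) :=
    (contDiff_succ_iff_deriv.mp (by rwa [one_add_one_eq_two])).2.2
  have hψdiff : DifferentiableAt ℝ ψ 0 := by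
    exact (((hF₂.differentiable (by norm_num)).differentiableAt.mul
      (hdG₂.differentiable (by norm_num)).differentiableAt).sub
      ((hdF₂.differentiable (by norm_num)).differentiableAt.mul
      (hG₂.differentiable (by norm_num)).differentiableAt))
  -- the model expression
  set E : ℝ → ℂ := fun z =>
      ((z ^ (2*ν+1) : ℝ) : ℂ) * (F₁ z * deriv G₁ z - deriv F₁ z * G₁ z)
      + ((z ^ (2-2*ν) : ℝ) : ℂ) * (ψ z / (z : ℂ))
      + ((z : ℝ) : ℂ) * (F₁ z * deriv G₂ z - deriv F₁ z * G₂ z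
          + F₂ z * deriv G₁ z - deriv F₂ z * G₁ z)
      + ((2*ν : ℝ) : ℂ) * (F₂ z * G₁ z - F₁ z * G₂ z) with hEdef
  -- pointwise identity on Ioi 0
  have hWE : ∀ z : ℝ, 0 < z → f z * deriv g z - deriv f z * g z = E z := by
    intro z hz
    have hUUr : z ^ (ν + 1/2) * z ^ (ν + 1/2) = z ^ (2*ν+1) := by
      rw [← rpow_add hz]; ring_nf
    have hVVr : z ^ (-ν + 1/2) * z ^ (-ν + 1/2) = z ^ (2-2*ν) / z := by
      rw [← rpow_add hz, show (2 - 2*ν) = (-ν + 1/2 + (-ν + 1/2)) + 1 by ring,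
        rpow_add_one hz.ne', mul_div_cancel_right₀ _ hz.ne']
    have hUVr : z ^ (ν + 1/2) * z ^ (-ν + 1/2) = z := by
      rw [← rpow_add hz, show ν + 1/2 + (-ν + 1/2) = (1:ℝ) by ring, rpow_one]
    have hUVbr : z ^ (ν + 1/2) * z ^ (-ν + 1/2 - 1) = 1 := by
      rw [← rpow_add hz, show ν + 1/2 + (-ν + 1/2 - 1) = (0:ℝ) by ring, rpow_zero]
    have hVUar : z ^ (-ν + 1/2) * z ^ (ν + 1/2 - 1) = 1 := by
      rw [← rpow_add hz, show -ν + 1/2 + (ν + 1/2 - 1) = (0:ℝ) by ring, rpow_zero]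
    have hUU : ((z ^ (ν + 1/2) : ℝ) : ℂ) * ((z ^ (ν + 1/2) : ℝ) : ℂ)
        = ((z ^ (2*ν+1) : ℝ) : ℂ) := by exact_mod_cast hUUr
    have hVV : ((z ^ (-ν + 1/2) : ℝ) : ℂ) * ((z ^ (-ν + 1/2) : ℝ) : ℂ)
        = ((z ^ (2-2*ν) : ℝ) : ℂ) / ((z : ℝ) : ℂ) := by exact_mod_cast hVVr
    have hUV : ((z ^ (ν + 1/2) : ℝ) : ℂ) * ((z ^ (-ν + 1/2) : ℝ) : ℂ)
        = ((z : ℝ) : ℂ) := by exact_mod_cast hUVr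
    have hUVb : ((z ^ (ν + 1/2) : ℝ) : ℂ) * ((z ^ (-ν + 1/2 - 1) : ℝ) : ℂ) = 1 := by
      exact_mod_cast hUVbr
    have hVUa : ((z ^ (-ν + 1/2) : ℝ) : ℂ) * ((z ^ (ν + 1/2 - 1) : ℝ) : ℂ) = 1 := by
      exact_mod_cast hVUar
    rw [hf z hz, hg z hz, aux_deriv ν F₁ F₂ hF₁ hF₂ f hf hz,
      aux_deriv ν G₁ G₂ hG₁ hG₂ g hg hz, hEdef, hψdef]
    push_cast
    linear_combination
      (F₁ z * deriv G₁ z - deriv F₁ z * G₁ z) * hUU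
      + (F₂ z * deriv G₂ z - deriv F₂ z * G₂ z) * hVV
      + (F₁ z * deriv G₂ z - deriv F₁ z * G₂ z
          + F₂ z * deriv G₁ z - deriv F₂ z * G₁ z) * hUV
      + ((-(ν:ℂ) + 1/2) * (F₁ z * G₂ z - F₂ z * G₁ z)) * hUVb
      + (((ν:ℂ) + 1/2) * (F₂ z * G₁ z - F₁ z * G₂ z)) * hVUa
  -- limits of the pieces
  have hrpow : ∀ p : ℝ, 0 < p →
      Tendsto (fun z : ℝ => ((z ^ p : ℝ) : ℂ)) (nhdsWithin 0 (Set.Ioi 0)) (nhds 0) := by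
    intro p hp
    have h1 : Tendsto (fun z : ℝ => z ^ p) (nhds 0) (nhds 0) := by
      have := (Real.continuousAt_rpow_const 0 p (Or.inr hp.le)).tendsto
      simpa [Real.zero_rpow hp.ne'] using this
    have h2 : Tendsto (fun z : ℝ => z ^ p) (nhdsWithin 0 (Set.Ioi 0)) (nhds 0) :=
      h1.mono_left nhdsWithin_le_nhds
    simpa [Function.comp_def] using (Complex.continuous_ofReal.tendsto 0).comp h2
  have cA : Tendsto (fun z => F₁ z * deriv G₁ z - deriv F₁ z * G₁ z)
      (nhdsWithin 0 (Set.Ioi 0)) (nhds (F₁ 0 * deriv G₁ 0 - deriv F₁ 0 * G₁ 0)) :=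
    (((hF₁.continuous.continuousAt.mul
      (hG₁.continuous_deriv (by norm_num)).continuousAt).sub
      ((hF₁.continuous_deriv (by norm_num)).continuousAt.mul
      hG₁.continuous.continuousAt)).tendsto).mono_left nhdsWithin_le_nhds
  have T1 : Tendsto (fun z : ℝ =>
      ((z ^ (2*ν+1) : ℝ) : ℂ) * (F₁ z * deriv G₁ z - deriv F₁ z * G₁ z))
      (nhdsWithin 0 (Set.Ioi 0)) (nhds 0) := by
    simpa using (hrpow (2*ν+1) (by linarith)).mul cA
  have hslope : Tendsto (fun z : ℝ => ψ z / (z : ℂ)) (nhdsWithin 0 (Set.Ioi 0))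
      (nhds (deriv ψ 0)) := by
    have h1 : Tendsto (slope ψ 0) (nhdsWithin 0 {(0:ℝ)}ᶜ) (nhds (deriv ψ 0)) :=
      hasDerivAt_iff_tendsto_slope.mp hψdiff.hasDerivAt
    have h2 : Tendsto (slope ψ 0) (nhdsWithin 0 (Set.Ioi 0)) (nhds (deriv ψ 0)) :=
      h1.mono_left (nhdsWithin_mono 0 (fun x hx => ne_of_gt hx))
    refine h2.congr fun z => ?_
    rw [slope_def_module, hψ0, sub_zero, sub_zero, Complex.real_smul,
      Complex.ofReal_inv, div_eq_inv_mul]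
  have T2 : Tendsto (fun z : ℝ => ((z ^ (2-2*ν) : ℝ) : ℂ) * (ψ z / (z : ℂ)))
      (nhdsWithin 0 (Set.Ioi 0)) (nhds 0) := by
    simpa using (hrpow (2-2*ν) (by linarith)).mul hslope
  have T3 : Tendsto (fun z : ℝ => ((z : ℝ) : ℂ) * (F₁ z * deriv G₂ z - deriv F₁ z * G₂ z
      + F₂ z * deriv G₁ z - deriv F₂ z * G₁ z)) (nhdsWithin 0 (Set.Ioi 0)) (nhds 0) := by
    have hz : Tendsto (fun z : ℝ => ((z : ℝ) : ℂ)) (nhdsWithin 0 (Set.Ioi 0)) (nhds 0) := by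
      have := (Complex.continuous_ofReal.tendsto 0)
      simpa using this.mono_left nhdsWithin_le_nhds
    have hB : Tendsto (fun z => F₁ z * deriv G₂ z - deriv F₁ z * G₂ z
        + F₂ z * deriv G₁ z - deriv F₂ z * G₁ z) (nhdsWithin 0 (Set.Ioi 0))
        (nhds (F₁ 0 * deriv G₂ 0 - deriv F₁ 0 * G₂ 0
          + F₂ 0 * deriv G₁ 0 - deriv F₂ 0 * G₁ 0)) :=
      ((((hF₁.continuous.continuousAt.mul (hG₂.continuous_deriv (by norm_num)).continuousAt).sub
        ((hF₁.continuous_deriv (by norm_num)).continuousAt.mul hG₂.continuous.continuousAt)).add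
        (hF₂.continuous.continuousAt.mul (hG₁.continuous_deriv (by norm_num)).continuousAt)).sub
        ((hF₂.continuous_deriv (by norm_num)).continuousAt.mul
          hG₁.continuous.continuousAt)).tendsto.mono_left nhdsWithin_le_nhds
    simpa using hz.mul hB
  have T4 : Tendsto (fun z : ℝ => ((2*ν : ℝ) : ℂ) * (F₂ z * G₁ z - F₁ z * G₂ z))
      (nhdsWithin 0 (Set.Ioi 0)) (nhds (((2 * ν : ℝ) : ℂ) * (F₂ 0 * G₁ 0 - F₁ 0 * G₂ 0))) := by
    exact (tendsto_const_nhds.mul (((hF₂.continuous.continuousAt.mul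
      hG₁.continuous.continuousAt).sub (hF₁.continuous.continuousAt.mul
      hG₂.continuous.continuousAt)).tendsto)).mono_left nhdsWithin_le_nhds
  have hE : Tendsto E (nhdsWithin 0 (Set.Ioi 0))
      (nhds (((2 * ν : ℝ) : ℂ) * (F₂ 0 * G₁ 0 - F₁ 0 * G₂ 0))) := by
    rw [hEdef]
    have := ((T1.add T2).add T3).add T4
    simpa using this
  have hmain : Tendsto (fun z => f z * deriv g z - deriv f z * g z)
      (nhdsWithin 0 (Set.Ioi 0))
      (nhds (((2 * ν : ℝ) : ℂ) * (F₂ 0 * G₁ 0 - F₁ 0 * G₂ 0))) := by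
    refine hE.congr' ?_
    exact eventually_of_mem self_mem_nhdsWithin fun z hz => (hWE z hz).symm
  refine ⟨hmain, fun h => ?_⟩
  have h0 : F₂ 0 * G₁ 0 - F₁ 0 * G₂ 0 = 0 := sub_eq_zero.mpr h.symm
  simpa [h0] using hmain
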